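/- Let A, k, f > 0, ω < 0, and define H(X, Y) = A·k·cos X·sinh Y − (ω/2)·Y² − f·Y. Suppose 0 < Y₁ < Y₂ are two distinct zeros of ψ(Y) = A·k·cosh Y + ω·Y + f. Then A·k·sinh Y₂ + ω > 0, and the Hessian matrix of H at (π, Y₂) is diagonal with entries ∂²H/∂X² = A·k·sinh Y₂ > 0 and ∂²H/∂Y² = −A·k·sinh Y₂ − ω < 0; in particular its determinant is negative, so (π, Y₂) is a saddle point of H. -/

import Mathlib

open Real

lemma strictConvexOn_cosh' : StrictConvexOn ℝ Set.univ Real.cosh :=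
  StrictMono.strictConvexOn_univ_of_deriv Real.continuous_cosh
    (by rw [Real.deriv_cosh]; exact Real.sinh_strictMono)

lemma deriv_fst (A k f ω : ℝ) (Y : ℝ) :
    deriv (fun X => A * k * Real.cos X * Real.sinh Y - ω / 2 * Y ^ 2 - f * Y)
      = fun X => -(A * k * Real.sinh Y * Real.sin X) := by
  funext X
  have h : HasDerivAt (fun X => A * k * Real.cos X * Real.sinh Y - ω / 2 * Y ^ 2 - f * Y)
      (-(A * k * Real.sinh Y * Real.sin X)) X := by
    have h1 := (((Real.hasDerivAt_cos X).const_mul (A * k)).mul_const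
      (Real.sinh Y)).sub_const (ω / 2 * Y ^ 2)
    have h2 := h1.sub_const (f * Y)
    exact h2.congr_deriv (by ring)
  exact h.deriv

/-- For `ω < 0`, at the upper zero `Y₂` of
`ψ(Y) = Ak·cosh Y + ωY + f` (with `0 < Y₁ < Y₂` the two zeros), one has
`Ak·sinh Y₂ + ω > 0`, and the Hessian of `H(X,Y) = Ak·cos X·sinh Y − ½ωY² − fY`
at `(π, Y₂)` is diagonal with entries `Ak·sinh Y₂ > 0` and
`−Ak·sinh Y₂ − ω < 0`; in particular its determinant is negative, so `(π, Y₂)`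
is a saddle point of `H`. -/
theorem saddle_P2 (A k f ω Y₁ Y₂ : ℝ) (hA : 0 < A) (hk : 0 < k) (hf : 0 < f)
    (hω : ω < 0) (hY₁ : 0 < Y₁) (hY₁₂ : Y₁ < Y₂)
    (hz₁ : A * k * Real.cosh Y₁ + ω * Y₁ + f = 0)
    (hz₂ : A * k * Real.cosh Y₂ + ω * Y₂ + f = 0)
    (H : ℝ → ℝ → ℝ)
    (hH : ∀ X Y, H X Y = A * k * Real.cos X * Real.sinh Y - ω / 2 * Y ^ 2 - f * Y) :
    0 < A * k * Real.sinh Y₂ + ω ∧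
    deriv (fun Y => deriv (fun X => H X Y) π) Y₂ = 0 ∧
    deriv (deriv (fun X => H X Y₂)) π = A * k * Real.sinh Y₂ ∧
    0 < A * k * Real.sinh Y₂ ∧
    deriv (deriv (fun Y => H π Y)) Y₂ = -(A * k * Real.sinh Y₂) - ω ∧
    -(A * k * Real.sinh Y₂) - ω < 0 ∧
    deriv (deriv (fun X => H X Y₂)) π * deriv (deriv (fun Y => H π Y)) Y₂ -
      (deriv (fun Y => deriv (fun X => H X Y) π) Y₂) ^ 2 < 0 := by
  have hAk : 0 < A * k := mul_pos hA hk
  -- main inequality: A k sinh Y₂ + ω > 0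
  have hslope : (Real.cosh Y₂ - Real.cosh Y₁) / (Y₂ - Y₁) < Real.sinh Y₂ := by
    have h := strictConvexOn_cosh'.slope_lt_deriv (Set.mem_univ Y₁) (Set.mem_univ Y₂)
      hY₁₂ (Real.hasDerivAt_cosh Y₂).differentiableAt
    rwa [slope_def_field, Real.deriv_cosh] at h
  have hpos : 0 < A * k * Real.sinh Y₂ + ω := by
    have hd : 0 < Y₂ - Y₁ := sub_pos.mpr hY₁₂
    have h1 : A * k * (Real.cosh Y₂ - Real.cosh Y₁) = -ω * (Y₂ - Y₁) := by linarith
    have h2 : (Real.cosh Y₂ - Real.cosh Y₁) / (Y₂ - Y₁) = -ω / (A * k) := by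
      field_simp
      linarith
    rw [h2] at hslope
    have := (div_lt_iff₀ hAk).mp hslope
    nlinarith
  -- derivatives
  have hHX : ∀ Y, (fun X => H X Y) = fun X =>
      A * k * Real.cos X * Real.sinh Y - ω / 2 * Y ^ 2 - f * Y :=
    fun Y => funext fun X => hH X Y
  have hdX : ∀ Y, deriv (fun X => H X Y) = fun X => -(A * k * Real.sinh Y * Real.sin X) := by
    intro Y; rw [hHX Y]; exact deriv_fst A k f ω Y
  -- mixed derivative is 0
  have hmix : deriv (fun Y => deriv (fun X => H X Y) π) Y₂ = 0 := by
    have : (fun Y => deriv (fun X => H X Y) π) = fun _ => (0 : ℝ) := by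
      funext Y; rw [hdX Y]; simp [Real.sin_pi]
    rw [this, deriv_const']
  -- second derivative in X
  have hXX : deriv (deriv (fun X => H X Y₂)) π = A * k * Real.sinh Y₂ := by
    rw [hdX Y₂]
    have h : HasDerivAt (fun X => -(A * k * Real.sinh Y₂ * Real.sin X))
        (-(A * k * Real.sinh Y₂ * Real.cos π)) π :=
      ((Real.hasDerivAt_sin π).const_mul (A * k * Real.sinh Y₂)).neg
    rw [h.deriv, Real.cos_pi]; ring
  -- second derivative in Y
  have hYY : deriv (deriv (fun Y => H π Y)) Y₂ = -(A * k * Real.sinh Y₂) - ω := by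
    have e : (fun Y => H π Y) = fun Y =>
        -(A * k * Real.sinh Y) - ω / 2 * Y ^ 2 - f * Y := by
      funext Y; rw [hH π Y, Real.cos_pi]; ring
    have d1 : deriv (fun Y => H π Y) = fun Y => -(A * k * Real.cosh Y) - ω * Y - f * 1 := by
      rw [e]; funext Y
      have h : HasDerivAt (fun Y => -(A * k * Real.sinh Y) - ω / 2 * Y ^ 2 - f * Y)
          (-(A * k * Real.cosh Y) - ω * Y - f * 1) Y := by
        have h1 := ((Real.hasDerivAt_sinh Y).const_mul (A * k)).neg
        have h2 := ((hasDerivAt_pow 2 Y).const_mul (ω / 2))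
        have h3 := (hasDerivAt_id Y).const_mul f
        have := (h1.sub h2).sub h3
        exact this.congr_deriv (by simp; ring)
      exact h.deriv
    rw [d1]
    have h : HasDerivAt (fun Y => -(A * k * Real.cosh Y) - ω * Y - f * 1)
        (-(A * k * Real.sinh Y₂) - ω * 1) Y₂ := by
      have h1 := ((Real.hasDerivAt_cosh Y₂).const_mul (A * k)).neg
      have h2 := (hasDerivAt_id Y₂).const_mul ω
      exact (h1.sub h2).sub_const (f * 1)
    rw [h.deriv]; ring
  have hsinhpos : 0 < A * k * Real.sinh Y₂ := by
    have : 0 < Real.sinh Y₂ := Real.sinh_pos_iff.mpr (lt_trans hY₁ hY₁₂)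
    positivity
  refine ⟨hpos, hmix, hXX, hsinhpos, hYY, by linarith, ?_⟩
  rw [hmix, hXX, hYY]
  nlinarith
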